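/- The negative eigenvalue λ₋ = (1/2)[((α/(nν))c_ν − 2) − √(((α/(nν))c_ν − 2)² + 8α/(nν))] of the Jacobian of F at Q = (1,1) satisfies 0 < 2 + λ₋ < 2 for all ν > 0. -/
import Mathlib


/-- The negative eigenvalue λ₋ at the saddle Q satisfies 0 < 2 + λ₋ < 2. -/
theorem stmt_18 (α n ν : ℝ) (hα : 0 < α) (hn : 0 < n) (hν : 0 < ν)
    (c : ℝ) (hc : c = 1 + ν * (n + 1) / α) :
    0 < 2 + (1 / 2) * ((α / (n * ν) * c - 2)
        - Real.sqrt ((α / (n * ν) * c - 2) ^ 2 + 8 * α / (n * ν))) ∧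
    2 + (1 / 2) * ((α / (n * ν) * c - 2)
        - Real.sqrt ((α / (n * ν) * c - 2) ^ 2 + 8 * α / (n * ν))) < 2 := by
  have hnν : 0 < n * ν := mul_pos hn hν
  have hb : 0 < α / (n * ν) := div_pos hα hnν
  have hc1 : 1 < c := by
    rw [hc]
    have : 0 < ν * (n + 1) / α := div_pos (mul_pos hν (by linarith)) hα
    linarith
  set t : ℝ := α / (n * ν) * c - 2 with ht
  have htb : α / (n * ν) < α / (n * ν) * c := by
    nlinarith
  have ht2 : -2 < t := by simp only [ht]; linarith
  have hx : 0 ≤ 8 * α / (n * ν) := by positivity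
  constructor
  · -- need sqrt (t^2 + 8b) < t + 4
    have h1 : Real.sqrt (t ^ 2 + 8 * α / (n * ν)) < t + 4 := by
      rw [show (8 : ℝ) * α / (n * ν) = 8 * (α / (n * ν)) by ring]
      rw [Real.sqrt_lt' (by linarith)]
      nlinarith
    linarith
  · have h2 : t < Real.sqrt (t ^ 2 + 8 * α / (n * ν)) := by
      have : Real.sqrt (t ^ 2) < Real.sqrt (t ^ 2 + 8 * α / (n * ν)) := by
        apply Real.sqrt_lt_sqrt (by positivity)
        have : 0 < 8 * α / (n * ν) := by positivity
        linarith
      calc t ≤ |t| := le_abs_self t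
        _ = Real.sqrt (t ^ 2) := (Real.sqrt_sq_eq_abs t).symm
        _ < _ := this
    linarith
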